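/- Let X₁,…,X_C be matrices with k rows, let M_c be the mean matrix of X_c, and let M be the mean matrix of the concatenation X = [X₁,…,X_C]. Then the gradient of the function X ↦ (1/2)∑_{c=1}^C ‖M_c - M^{(c)}‖_F² with respect to X is [M₁,…,M_C] - M, where M^{(c)} denotes the block of M aligned with X_c. -/

import Mathlib

/-- Frobenius inner product as a sum of entrywise products. -/
def frobInner {m n : Type*} [Fintype m] [Fintype n] (A B : Matrix m n ℝ) : ℝ :=
  ∑ i, ∑ j, A i j * B i j

/-- Mean of the columns of the class-`c` block of `X`. -/
noncomputable def meanC {k C : ℕ} {n : Fin C → ℕ}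
    (X : Matrix (Fin k) ((c : Fin C) × Fin (n c)) ℝ) (c : Fin C) (i : Fin k) : ℝ :=
  ((n c : ℝ))⁻¹ * ∑ j, X i ⟨c, j⟩

/-- Mean of all columns of `X`. -/
noncomputable def meanAll {k C : ℕ} {n : Fin C → ℕ}
    (X : Matrix (Fin k) ((c : Fin C) × Fin (n c)) ℝ) (i : Fin k) : ℝ :=
  (((∑ c, n c : ℕ) : ℝ))⁻¹ * ∑ p, X i p

lemma meanC_lin {k C : ℕ} {n : Fin C → ℕ}
    (X H : Matrix (Fin k) ((c : Fin C) × Fin (n c)) ℝ) (t : ℝ) (c : Fin C) (i : Fin k) :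
    meanC (X + t • H) c i = meanC X c i + t * meanC H c i := by
  simp only [meanC, Matrix.add_apply, Matrix.smul_apply, smul_eq_mul,
    Finset.sum_add_distrib, ← Finset.mul_sum, mul_add]
  ring

lemma meanAll_lin {k C : ℕ} {n : Fin C → ℕ}
    (X H : Matrix (Fin k) ((c : Fin C) × Fin (n c)) ℝ) (t : ℝ) (i : Fin k) :
    meanAll (X + t • H) i = meanAll X i + t * meanAll H i := by
  simp only [meanAll, Matrix.add_apply, Matrix.smul_apply, smul_eq_mul,
    Finset.sum_add_distrib, ← Finset.mul_sum, mul_add]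
  ring

lemma nmul_meanC {k C : ℕ} {n : Fin C → ℕ} (hn : ∀ c, 1 ≤ n c)
    (X : Matrix (Fin k) ((c : Fin C) × Fin (n c)) ℝ) (c : Fin C) (i : Fin k) :
    (n c : ℝ) * meanC X c i = ∑ j, X i ⟨c, j⟩ := by
  have hnc : (n c : ℝ) ≠ 0 := by
    exact_mod_cast Nat.one_le_iff_ne_zero.mp (hn c)
  rw [meanC, ← mul_assoc, mul_inv_cancel₀ hnc, one_mul]

lemma sum_sigma' {C : ℕ} {n : Fin C → ℕ}
    (f : ((c : Fin C) × Fin (n c)) → ℝ) :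
    ∑ p : (c : Fin C) × Fin (n c), f p = ∑ c, ∑ j, f ⟨c, j⟩ := by
  rw [← Finset.univ_sigma_univ, Finset.sum_sigma]

lemma key_zero {k C : ℕ} {n : Fin C → ℕ} (hn : ∀ c, 1 ≤ n c)
    (X : Matrix (Fin k) ((c : Fin C) × Fin (n c)) ℝ) (i : Fin k) :
    ∑ c, (n c : ℝ) * (meanC X c i - meanAll X i) = 0 := by
  simp only [mul_sub]
  rw [Finset.sum_sub_distrib]
  have h1 : ∑ c, (n c : ℝ) * meanC X c i = ∑ p : (c : Fin C) × Fin (n c), X i p := by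
    rw [sum_sigma' (fun p => X i p)]
    exact Finset.sum_congr rfl fun c _ => nmul_meanC hn X c i
  have h2 : ∑ c, (n c : ℝ) * meanAll X i = ∑ p : (c : Fin C) × Fin (n c), X i p := by
    rw [← Finset.sum_mul]
    by_cases hN : (∑ c, n c) = 0
    · have hc : ∀ c : Fin C, False := fun c =>
        Nat.one_le_iff_ne_zero.mp (hn c)
          ((Finset.sum_eq_zero_iff.mp hN) c (Finset.mem_univ c))
      have : IsEmpty ((c : Fin C) × Fin (n c)) := ⟨fun p => hc p.1⟩
      have : IsEmpty (Fin C) := ⟨fun c => hc c⟩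
      simp
    · have hcast : (∑ c, (n c : ℝ)) = ((∑ c, n c : ℕ) : ℝ) := by push_cast; ring
      rw [hcast, meanAll, ← mul_assoc,
        mul_inv_cancel₀ (by exact_mod_cast hN), one_mul]
  rw [h1, h2, sub_self]

theorem grad_half_sum_mean_dev (k C : ℕ) (n : Fin C → ℕ) (hn : ∀ c, 1 ≤ n c)
    (X : Matrix (Fin k) ((c : Fin C) × Fin (n c)) ℝ) :
    ∀ H : Matrix (Fin k) ((c : Fin C) × Fin (n c)) ℝ,
      HasDerivAt
        (fun t : ℝ => (1 / 2) *
          ∑ c, ∑ _j : Fin (n c), ∑ i,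
            (meanC (X + t • H) c i - meanAll (X + t • H) i) ^ 2)
        (frobInner (Matrix.of fun i p => meanC X p.1 i - meanAll X i) H) 0 := by
  intro H
  set a : Fin C → Fin k → ℝ := fun c i => meanC X c i - meanAll X i with ha
  set b : Fin C → Fin k → ℝ := fun c i => meanC H c i - meanAll H i with hb
  have hfun : (fun t : ℝ => (1 / 2) *
      ∑ c, ∑ _j : Fin (n c), ∑ i,
        (meanC (X + t • H) c i - meanAll (X + t • H) i) ^ 2)
      = fun t : ℝ => (1 / 2) * ∑ c, ∑ _j : Fin (n c), ∑ i, (a c i + t * b c i) ^ 2 := by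
    funext t
    congr 1
    refine Finset.sum_congr rfl fun c _ => Finset.sum_congr rfl fun j _ =>
      Finset.sum_congr rfl fun i _ => ?_
    rw [meanC_lin, meanAll_lin, ha, hb]
    ring
  rw [hfun]
  have hder : HasDerivAt
      (fun t : ℝ => (1 / 2) * ∑ c, ∑ _j : Fin (n c), ∑ i, (a c i + t * b c i) ^ 2)
      ((1 / 2) * ∑ c, ∑ _j : Fin (n c), ∑ i, (2 * a c i * b c i)) 0 := by
    refine HasDerivAt.const_mul _ ?_
    refine HasDerivAt.fun_sum fun c _ => HasDerivAt.fun_sum fun j _ => HasDerivAt.fun_sum fun i _ => ?_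
    have h := (((hasDerivAt_mul_const (x := (0:ℝ)) (b c i)).const_add (a c i)).fun_pow 2)
    simpa using h
  convert hder using 1
  -- equality of derivative values
  rw [frobInner]
  have lhs_eq : ∑ i, ∑ p : (c : Fin C) × Fin (n c),
      (Matrix.of fun i p => meanC X p.1 i - meanAll X i) i p * H i p
      = ∑ c, ∑ i, a c i * ∑ j, H i ⟨c, j⟩ := by
    rw [Finset.sum_comm, sum_sigma']
    refine Finset.sum_congr rfl fun c _ => ?_
    rw [Finset.sum_comm]
    refine Finset.sum_congr rfl fun i _ => ?_
    rw [Finset.mul_sum]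
    rfl
  rw [lhs_eq]
  simp only [Finset.sum_const, Finset.card_univ, Fintype.card_fin, nsmul_eq_mul]
  have rhs_eq : ∀ c : Fin C, (1/2 : ℝ) * ((n c : ℝ) * ∑ i, 2 * a c i * b c i)
      = (∑ i, a c i * ∑ j, H i ⟨c, j⟩) - ∑ i, (n c : ℝ) * a c i * meanAll H i := by
    intro c
    rw [Finset.mul_sum, Finset.mul_sum, ← Finset.sum_sub_distrib]
    refine Finset.sum_congr rfl fun i _ => ?_
    rw [← nmul_meanC hn H c i, hb]
    ring
  calc ∑ c, ∑ i, a c i * ∑ j, H i ⟨c, j⟩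
      = (∑ c, ∑ i, a c i * ∑ j, H i ⟨c, j⟩)
        - ∑ c, ∑ i, (n c : ℝ) * a c i * meanAll H i := by
        have hz : ∑ c, ∑ i, (n c : ℝ) * a c i * meanAll H i = 0 := by
          rw [Finset.sum_comm]
          refine Finset.sum_eq_zero fun i _ => ?_
          have hk := key_zero hn X i
          calc ∑ c, (n c : ℝ) * a c i * meanAll H i
              = (∑ c, (n c : ℝ) * (meanC X c i - meanAll X i)) * meanAll H i := by
                rw [Finset.sum_mul]
            _ = 0 := by rw [hk, zero_mul]
        rw [hz, sub_zero]
    _ = ∑ c, ((∑ i, a c i * ∑ j, H i ⟨c, j⟩) - ∑ i, (n c : ℝ) * a c i * meanAll H i) := by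
        rw [Finset.sum_sub_distrib]
    _ = ∑ c, (1/2 : ℝ) * ((n c : ℝ) * ∑ i, 2 * a c i * b c i) := by
        exact Finset.sum_congr rfl fun c _ => (rhs_eq c).symm
    _ = (1/2 : ℝ) * ∑ c, (n c : ℝ) * ∑ i, 2 * a c i * b c i := by
        rw [Finset.mul_sum]
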